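/- Let 0 < λ ≤ λ′. If f : (0,∞) → ℝ is a generalized Stieltjes function of order λ, then f is a generalized Stieltjes function of order λ′; that is, S_λ ⊆ S_{λ′}. -/

import Mathlib

open MeasureTheory Set Filter
open scoped ENNReal NNReal

/-- `f` is a generalized Stieltjes function of order `λ`. -/
def IsGenStieltjes (lam : ℝ) (f : ℝ → ℝ) : Prop :=
  ∃ (C : ℝ) (ρ : Measure ℝ), 0 ≤ C ∧ ρ (Set.Iio 0) = 0 ∧
    (∀ x > (0 : ℝ), Integrable (fun t => (x + t) ^ (-lam)) ρ) ∧
    ∀ x > (0 : ℝ), f x = C + ∫ t, (x + t) ^ (-lam) ∂ρ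

section aux

open Real

/-- Integrability of the Beta-type integrand on `(0,∞)`. -/
lemma phi_integrableOn {a b : ℝ} (ha : 0 < a) (hab : a < b) :
    IntegrableOn (fun σ : ℝ => σ ^ (a - 1) * (1 + σ) ^ (-b)) (Ioi 0) := by
  have hmeas : Measurable fun σ : ℝ => σ ^ (a - 1) * (1 + σ) ^ (-b) := by fun_prop
  have h1 : IntegrableOn (fun σ : ℝ => σ ^ (a - 1) * (1 + σ) ^ (-b)) (Ioc 0 1) := by
    have hbase : IntegrableOn (fun σ : ℝ => σ ^ (a - 1)) (Ioc 0 1) := by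
      have := intervalIntegral.intervalIntegrable_rpow' (a := 0) (b := 1) (r := a - 1)
        (by linarith)
      rwa [intervalIntegrable_iff_integrableOn_Ioc_of_le zero_le_one] at this
    refine hbase.mono' hmeas.aestronglyMeasurable ?_
    filter_upwards [ae_restrict_mem measurableSet_Ioc] with σ hσ
    have hσ0 : 0 < σ := hσ.1
    have h1σ : (0:ℝ) ≤ (1 + σ) ^ (-b) := rpow_nonneg (by linarith) _
    have h1σ' : (1 + σ) ^ (-b) ≤ 1 :=
      rpow_le_one_of_one_le_of_nonpos (by linarith) (by linarith)
    rw [norm_mul, norm_of_nonneg (rpow_nonneg hσ0.le _), norm_of_nonneg h1σ]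
    calc σ ^ (a - 1) * (1 + σ) ^ (-b) ≤ σ ^ (a - 1) * 1 := by
          exact mul_le_mul_of_nonneg_left h1σ' (rpow_nonneg hσ0.le _)
      _ = σ ^ (a - 1) := mul_one _
  have h2 : IntegrableOn (fun σ : ℝ => σ ^ (a - 1) * (1 + σ) ^ (-b)) (Ioi 1) := by
    have hbase : IntegrableOn (fun σ : ℝ => σ ^ (a - 1 - b)) (Ioi (1:ℝ)) :=
      integrableOn_Ioi_rpow_of_lt (by linarith) one_pos
    refine hbase.mono' hmeas.aestronglyMeasurable ?_
    filter_upwards [ae_restrict_mem measurableSet_Ioi] with σ hσ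
    have hσ0 : (0:ℝ) < σ := lt_trans one_pos hσ
    have h1σ : (0:ℝ) ≤ (1 + σ) ^ (-b) := rpow_nonneg (by linarith) _
    rw [norm_mul, norm_of_nonneg (rpow_nonneg hσ0.le _), norm_of_nonneg h1σ]
    have hle : (1 + σ) ^ (-b) ≤ σ ^ (-b) :=
      rpow_le_rpow_of_nonpos hσ0 (by linarith) (by linarith)
    calc σ ^ (a - 1) * (1 + σ) ^ (-b) ≤ σ ^ (a - 1) * σ ^ (-b) :=
          mul_le_mul_of_nonneg_left hle (rpow_nonneg hσ0.le _)
      _ = σ ^ (a - 1 - b) := by rw [← rpow_add hσ0]; ring_nf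
  have : IntegrableOn (fun σ : ℝ => σ ^ (a - 1) * (1 + σ) ^ (-b)) (Ioc 0 1 ∪ Ioi 1) :=
    h1.union h2
  refine this.mono_set ?_
  intro σ hσ
  rcases le_or_gt σ 1 with h | h
  · exact Or.inl ⟨hσ, h⟩
  · exact Or.inr h

/-- Scaling identity: substitution `s = u σ`. -/
lemma scale_integral {a b u : ℝ} (hu : 0 < u) :
    ∫ s in Ioi (0:ℝ), s ^ (a - 1) * (u + s) ^ (-b)
      = u ^ (a - b) * ∫ σ in Ioi (0:ℝ), σ ^ (a - 1) * (1 + σ) ^ (-b) := by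
  have h := integral_comp_mul_left_Ioi
    (fun s : ℝ => s ^ (a - 1) * (u + s) ^ (-b)) 0 hu
  rw [mul_zero] at h
  have hcongr : ∫ x in Ioi (0:ℝ), (u * x) ^ (a - 1) * (u + u * x) ^ (-b)
      = ∫ x in Ioi (0:ℝ), u ^ (a - 1) * u ^ (-b) * (x ^ (a - 1) * (1 + x) ^ (-b)) := by
    refine setIntegral_congr_fun measurableSet_Ioi fun x hx => ?_
    have hx0 : (0:ℝ) < x := hx
    rw [mul_rpow hu.le hx0.le, show u + u * x = u * (1 + x) by ring,
      mul_rpow hu.le (by linarith)]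
    ring
  rw [hcongr, integral_const_mul] at h
  have := h.symm
  rw [smul_eq_mul] at this
  have h2 : ∫ s in Ioi (0:ℝ), s ^ (a - 1) * (u + s) ^ (-b)
      = u * (u ^ (a - 1) * u ^ (-b) * ∫ σ in Ioi (0:ℝ), σ ^ (a - 1) * (1 + σ) ^ (-b)) := by
    rw [← this]
    field_simp
  rw [h2, show a - b = 1 + (a - 1) + (-b) by ring, Real.rpow_add hu, Real.rpow_add hu,
    Real.rpow_one]
  ring

lemma scale_integrableOn {a b u : ℝ} (ha : 0 < a) (hab : a < b) (hu : 0 < u) :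
    IntegrableOn (fun s : ℝ => s ^ (a - 1) * (u + s) ^ (-b)) (Ioi 0) := by
  have h := (integrableOn_Ioi_comp_mul_left_iff
    (fun s : ℝ => s ^ (a - 1) * (u + s) ^ (-b)) 0 hu)
  rw [mul_zero] at h
  rw [← h]
  have : IntegrableOn
      (fun x : ℝ => u ^ (a - 1) * u ^ (-b) * (x ^ (a - 1) * (1 + x) ^ (-b))) (Ioi 0) :=
    (phi_integrableOn ha hab).const_mul _
  refine this.congr_fun (fun x hx => ?_) measurableSet_Ioi
  have hx0 : (0:ℝ) < x := hx
  show _ = (u * x) ^ (a - 1) * (u + u * x) ^ (-b)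
  rw [Real.mul_rpow hu.le hx0.le, show u + u * x = u * (1 + x) by ring,
    Real.mul_rpow hu.le (by linarith)]
  ring

end aux

/-- for `0 < λ ≤ λ′`, `S_λ ⊆ S_{λ′}`. -/
theorem stmt9 (lam lam' : ℝ) (hlam : 0 < lam) (hle : lam ≤ lam')
    (f : ℝ → ℝ) (hf : IsGenStieltjes lam f) :
    IsGenStieltjes lam' f := by
  rcases eq_or_lt_of_le hle with rfl | hlt
  · exact hf
  obtain ⟨C, ρ, hC, hρ0, hint, hrep⟩ := hf
  -- `ρ` is σ-finite
  have hSF : SigmaFinite ρ := by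
    refine ⟨⟨⟨fun n => Iio 0 ∪ Icc 0 n, fun _ => mem_univ _, fun n => ?_, ?_⟩⟩⟩
    · have h1 := hint 1 one_pos
      have hfin : ∫⁻ t, ‖(1 + t) ^ (-lam)‖₊ ∂ρ < ⊤ := h1.2
      have hcst : (0:ℝ) < (1 + (n:ℝ)) ^ (-lam) :=
        Real.rpow_pos_of_pos (by positivity) _
      have hb : ENNReal.ofReal ((1 + (n:ℝ)) ^ (-lam)) * ρ (Icc 0 n)
          ≤ ∫⁻ t, ‖(1 + t) ^ (-lam)‖₊ ∂ρ := by
        rw [← setLIntegral_const (Icc (0:ℝ) n) _]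
        refine le_trans (setLIntegral_mono
          (by fun_prop : Measurable fun t : ℝ => (‖(1 + t) ^ (-lam)‖₊ : ENNReal))
          fun t ht => ?_) (setLIntegral_le_lintegral _ _)
        have ht0 : (0:ℝ) ≤ t := ht.1
        have h1t : (0:ℝ) < 1 + t := by linarith
        have hmono : (1 + (n:ℝ)) ^ (-lam) ≤ (1 + t) ^ (-lam) :=
          Real.rpow_le_rpow_of_nonpos h1t (by linarith [ht.2]) (by linarith)
        rw [← enorm_eq_nnnorm, Real.enorm_eq_ofReal (Real.rpow_pos_of_pos h1t _).le]
        exact ENNReal.ofReal_le_ofReal hmono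
      have hρIcc : ρ (Icc 0 n) < ⊤ := by
        by_contra hcon
        push_neg at hcon
        rw [top_le_iff.mp hcon, ENNReal.mul_top (by positivity)] at hb
        exact absurd (top_le_iff.mp hb) hfin.ne
      calc ρ (Iio 0 ∪ Icc 0 n) ≤ ρ (Iio 0) + ρ (Icc 0 n) := measure_union_le _ _
        _ < ⊤ := by rw [hρ0, zero_add]; exact hρIcc
    · refine eq_univ_of_forall fun x => mem_iUnion.mpr ?_
      rcases lt_or_ge x 0 with h | h
      · exact ⟨0, Or.inl h⟩
      · exact ⟨⌈x⌉₊, Or.inr ⟨h, Nat.le_ceil x⟩⟩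
  set a : ℝ := lam' - lam with ha_def
  have ha : 0 < a := by simp [ha_def]; linarith
  set K : ℝ := ∫ σ in Ioi (0:ℝ), σ ^ (a - 1) * (1 + σ) ^ (-lam') with hK_def
  have hab : a < lam' := by simp [ha_def]; linarith
  have hKpos : 0 < K := by
    rw [hK_def]
    rw [setIntegral_pos_iff_support_of_nonneg_ae]
    · have hsup : (Function.support fun σ : ℝ => σ ^ (a - 1) * (1 + σ) ^ (-lam')) ∩ Ioi 0
          = Ioi 0 := by
        refine inter_eq_self_of_subset_right fun σ hσ => ?_
        have hσ0 : (0:ℝ) < σ := hσ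
        exact Function.mem_support.mpr (ne_of_gt (by positivity))
      rw [hsup]
      simp
    · filter_upwards [ae_restrict_mem measurableSet_Ioi] with σ hσ
      have hσ0 : (0:ℝ) < σ := hσ
      positivity
    · exact phi_integrableOn ha hab
  set c : ℝ := K⁻¹ with hc_def
  have hc : 0 < c := inv_pos.mpr hKpos
  set g : ℝ → ℝ≥0∞ := fun s => ENNReal.ofReal (c * s ^ (a - 1)) with hg_def
  have hg : Measurable g := by
    rw [hg_def]; fun_prop
  set μ : Measure ℝ := (volume.restrict (Ioi 0)).withDensity g with hμ_def
  set ρ' : Measure ℝ := Measure.map (fun p : ℝ × ℝ => p.1 + p.2) (ρ.prod μ) with hρ'_def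
  have hadd : Measurable fun p : ℝ × ℝ => p.1 + p.2 := measurable_fst.add measurable_snd
  -- inner identity
  have hinner : ∀ u : ℝ, 0 < u →
      ∫⁻ s, ENNReal.ofReal ((u + s) ^ (-lam')) ∂μ = ENNReal.ofReal (u ^ (-lam)) := by
    intro u hu
    rw [hμ_def, lintegral_withDensity_eq_lintegral_mul _ hg
      (by fun_prop : Measurable fun s : ℝ => ENNReal.ofReal ((u + s) ^ (-lam')))]
    have hcongr : ∀ s ∈ Ioi (0:ℝ),
        (g * fun s => ENNReal.ofReal ((u + s) ^ (-lam'))) s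
          = ENNReal.ofReal (c * (s ^ (a - 1) * (u + s) ^ (-lam'))) := by
      intro s hs
      have hs0 : (0:ℝ) < s := hs
      simp only [Pi.mul_apply, hg_def]
      rw [← ENNReal.ofReal_mul (by positivity)]
      ring_nf
    rw [setLIntegral_congr_fun measurableSet_Ioi hcongr]
    rw [← ofReal_integral_eq_lintegral_ofReal
      (((scale_integrableOn ha hab hu).const_mul c))
      (by
        filter_upwards [ae_restrict_mem measurableSet_Ioi] with s hs
        have hs0 : (0:ℝ) < s := hs
        positivity)]
    congr 1
    rw [MeasureTheory.integral_const_mul, scale_integral hu,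
      show a - lam' = -lam by rw [ha_def]; ring]
    rw [hc_def]
    field_simp
    exact hK_def.symm
  -- ρ' is supported on [0, ∞)
  have hρ'0 : ρ' (Iio 0) = 0 := by
    rw [hρ'_def, Measure.map_apply hadd measurableSet_Iio]
    have hsub : (fun p : ℝ × ℝ => p.1 + p.2) ⁻¹' Iio 0
        ⊆ (Iio 0 ×ˢ univ) ∪ (univ ×ˢ Iio 0) := by
      rintro ⟨t, s⟩ h
      simp only [mem_preimage, mem_Iio] at h
      by_contra hcon
      simp only [mem_union, prodMk_mem_set_prod_eq, mem_Iio, mem_univ, and_true,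
        true_and, not_or, not_lt] at hcon
      linarith [hcon.1, hcon.2]
    refine le_antisymm (le_trans (measure_mono hsub) ?_) (zero_le)
    refine le_trans (measure_union_le _ _) ?_
    rw [Measure.prod_prod, Measure.prod_prod, hρ0, zero_mul]
    have hμ0 : μ (Iio 0) = 0 := by
      rw [hμ_def, withDensity_apply _ measurableSet_Iio,
        Measure.restrict_restrict measurableSet_Iio]
      have : Iio (0:ℝ) ∩ Ioi 0 = ∅ := by
        ext x; simp only [mem_inter_iff, mem_Iio, mem_Ioi, mem_empty_iff_false, iff_false]
        rintro ⟨h1, h2⟩; linarith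
      rw [this]; simp
    rw [hμ0, mul_zero, add_zero]
  -- key computation
  have hmx : ∀ x : ℝ, Measurable fun u : ℝ => (x + u) ^ (-lam') := fun x => by fun_prop
  have haet : ∀ᵐ t ∂ρ, (0:ℝ) ≤ t := by
    rw [ae_iff]
    have : {t : ℝ | ¬ (0:ℝ) ≤ t} = Iio 0 := by ext t; simp
    rw [this]; exact hρ0
  have key : ∀ x : ℝ, 0 < x →
      ∫⁻ u, ENNReal.ofReal ((x + u) ^ (-lam')) ∂ρ'
        = ENNReal.ofReal (∫ t, (x + t) ^ (-lam) ∂ρ) := by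
    intro x hx
    rw [hρ'_def, lintegral_map (hmx x).ennreal_ofReal hadd]
    rw [lintegral_prod _ (by fun_prop :
      AEMeasurable (fun p : ℝ × ℝ => ENNReal.ofReal ((x + (p.1 + p.2)) ^ (-lam'))) (ρ.prod μ))]
    have hstep : ∫⁻ t, (∫⁻ s, ENNReal.ofReal ((x + (t + s)) ^ (-lam')) ∂μ) ∂ρ
        = ∫⁻ t, ENNReal.ofReal ((x + t) ^ (-lam)) ∂ρ := by
      refine lintegral_congr_ae ?_
      filter_upwards [haet] with t ht
      have hxt : 0 < x + t := by linarith
      calc ∫⁻ s, ENNReal.ofReal ((x + (t + s)) ^ (-lam')) ∂μ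
          = ∫⁻ s, ENNReal.ofReal (((x + t) + s) ^ (-lam')) ∂μ := by
            congr 1; ext s; ring_nf
        _ = ENNReal.ofReal ((x + t) ^ (-lam)) := hinner _ hxt
    rw [hstep, ← ofReal_integral_eq_lintegral_ofReal (hint x hx)
      (by filter_upwards [haet] with t ht
          exact (Real.rpow_pos_of_pos (by linarith) _).le)]
  -- conclude
  have haeu : ∀ᵐ u ∂ρ', (0:ℝ) ≤ u := by
    rw [ae_iff]
    have : {u : ℝ | ¬ (0:ℝ) ≤ u} = Iio 0 := by ext u; simp
    rw [this]; exact hρ'0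
  have hint' : ∀ x > (0:ℝ), Integrable (fun u => (x + u) ^ (-lam')) ρ' := by
    intro x hx
    refine ⟨(hmx x).aestronglyMeasurable, ?_⟩
    rw [hasFiniteIntegral_iff_ofReal (by
      filter_upwards [haeu] with u hu
      exact (Real.rpow_pos_of_pos (by linarith) _).le)]
    rw [key x hx]
    exact ENNReal.ofReal_lt_top
  refine ⟨C, ρ', hC, hρ'0, hint', fun x hx => ?_⟩
  rw [hrep x hx]
  congr 1
  rw [integral_eq_lintegral_of_nonneg_ae
    (by filter_upwards [haeu] with u hu
        exact (Real.rpow_pos_of_pos (by linarith) _).le)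
    (hmx x).aestronglyMeasurable, key x hx, ENNReal.toReal_ofReal]
  exact integral_nonneg_of_ae (by
    filter_upwards [haet] with t ht
    exact (Real.rpow_pos_of_pos (by linarith) _).le)
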